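/- Let μ be a probability measure, Φ a convex Orlicz function, and ‖·‖_Φ the Luxemburg norm with ‖𝟙‖_Φ the norm of the constant function 1. Then for any f in the Orlicz space and any minimizer M_Φ(f) of a ↦ ‖f−a‖_Φ: ‖f − μ(f)‖_Φ ≤ (1 + Φ⁻¹(1)·‖𝟙‖_Φ)·‖f − M_Φ(f)‖_Φ. -/

import Mathlib

open MeasureTheory

/-- The Luxemburg norm of `g` with respect to the Orlicz function `Φ` and measure `μ`. -/
noncomputable def luxNorm {Ω : Type*} [MeasurableSpace Ω] (μ : Measure Ω)
    (Φ : ℝ → ℝ) (g : Ω → ℝ) : ℝ :=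
  sInf {lam : ℝ | 0 < lam ∧ ∫ ω, Φ (|g ω| / lam) ∂μ ≤ 1}

/-- The generalized inverse of `Φ` at `1`. -/
noncomputable def invPhiOne (Φ : ℝ → ℝ) : ℝ := sInf {t : ℝ | 0 ≤ t ∧ 1 ≤ Φ t}


section Aux
variable {Φ : ℝ → ℝ}

lemma aux_nonneg (hmono : MonotoneOn Φ (Set.Ici 0)) (hΦ0 : Φ 0 = 0) {t : ℝ} (ht : 0 ≤ t) :
    0 ≤ Φ t := by
  have := hmono (Set.mem_Ici.2 le_rfl) (Set.mem_Ici.2 ht) ht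
  linarith

lemma aux_smul (hconv : ConvexOn ℝ (Set.Ici 0) Φ) (hΦ0 : Φ 0 = 0) {θ t : ℝ}
    (hθ0 : 0 ≤ θ) (hθ1 : θ ≤ 1) (ht : 0 ≤ t) : Φ (θ * t) ≤ θ * Φ t := by
  have h := hconv.2 (Set.mem_Ici.2 le_rfl) (Set.mem_Ici.2 ht) (by linarith : (0:ℝ) ≤ 1 - θ) hθ0
    (by ring)
  simpa [hΦ0] using h

lemma aux_csplit (hconv : ConvexOn ℝ (Set.Ici 0) Φ) {x y p q : ℝ}
    (hx : 0 ≤ x) (hy : 0 ≤ y) (hp : 0 < p) (hq : 0 < q) :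
    Φ ((x + y) / (p + q)) ≤ p / (p + q) * Φ (x / p) + q / (p + q) * Φ (y / q) := by
  have hpq : 0 < p + q := by linarith
  have h := hconv.2 (Set.mem_Ici.2 (div_nonneg hx hp.le)) (Set.mem_Ici.2 (div_nonneg hy hq.le))
    (div_nonneg hp.le hpq.le) (div_nonneg hq.le hpq.le)
    (by field_simp)
  simp only [smul_eq_mul] at h
  have harg : p / (p + q) * (x / p) + q / (p + q) * (y / q) = (x + y) / (p + q) := by
    field_simp
  rw [harg] at h
  exact h

end Aux

section Cont
variable {Φ : ℝ → ℝ}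

lemma aux_lip (hconv : ConvexOn ℝ (Set.Ici 0) Φ) (hmono : MonotoneOn Φ (Set.Ici 0))
    {R : ℝ} (hR : 0 ≤ R) {u v : ℝ} (hu : u ∈ Set.Icc (0:ℝ) R) (hv : v ∈ Set.Icc (0:ℝ) R)
    (huv : u ≤ v) : |Φ v - Φ u| ≤ (Φ (R+1) - Φ R) * |v - u| := by
  rcases eq_or_lt_of_le huv with rfl | hlt
  · simp
  have hu0 : (0:ℝ) ≤ u := hu.1
  have hvR : v ≤ R := hv.2
  have h1 : (Φ v - Φ u) / (v - u) ≤ (Φ (R+1) - Φ u) / ((R+1) - u) := by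
    apply hconv.secant_mono (Set.mem_Ici.2 hu0) (Set.mem_Ici.2 (hu0.trans huv))
      (Set.mem_Ici.2 (by linarith)) (by linarith) (by linarith) (by linarith)
  have h2 : (Φ (R+1) - Φ u) / ((R+1) - u) ≤ Φ (R+1) - Φ R := by
    have h := hconv.secant_mono (Set.mem_Ici.2 (by linarith : (0:ℝ) ≤ R+1))
      (Set.mem_Ici.2 hu0) (Set.mem_Ici.2 hR) (by linarith) (by linarith) (by linarith)
    have e1 : (Φ u - Φ (R+1)) / (u - (R+1)) = (Φ (R+1) - Φ u) / ((R+1) - u) := by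
      rw [← neg_div_neg_eq]; ring_nf
    have e2 : (Φ R - Φ (R+1)) / (R - (R+1)) = Φ (R+1) - Φ R := by
      rw [← neg_div_neg_eq]; ring_nf
    rw [e1, e2] at h; exact h
  have hmon : Φ u ≤ Φ v := hmono (Set.mem_Ici.2 hu0) (Set.mem_Ici.2 (hu0.trans huv)) huv
  have habs1 : |Φ v - Φ u| = Φ v - Φ u := abs_of_nonneg (by linarith)
  have habs2 : |v - u| = v - u := abs_of_nonneg (by linarith)
  rw [habs1, habs2]
  have := (div_le_iff₀ (by linarith : (0:ℝ) < v - u)).1 (h1.trans h2)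
  linarith

lemma aux_cont (hconv : ConvexOn ℝ (Set.Ici 0) Φ) (hmono : MonotoneOn Φ (Set.Ici 0)) :
    ContinuousOn Φ (Set.Ici 0) := by
  intro x hx
  have hx0 : (0:ℝ) ≤ x := hx
  set R := x + 1 with hRdef
  have hR : (0:ℝ) ≤ R := by linarith
  have hK : 0 ≤ Φ (R+1) - Φ R := by
    have := hmono (Set.mem_Ici.2 hR) (Set.mem_Ici.2 (by linarith : (0:ℝ) ≤ R+1)) (by linarith)
    linarith
  have hlipOn : LipschitzOnWith (Real.toNNReal (Φ (R+1) - Φ R)) Φ (Set.Icc 0 R) := by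
    rw [lipschitzOnWith_iff_dist_le_mul]
    intro a ha b hb
    rw [Real.dist_eq, Real.dist_eq]
    have hcoe : (Real.toNNReal (Φ (R+1) - Φ R) : ℝ) = Φ (R+1) - Φ R := Real.coe_toNNReal _ hK
    rw [hcoe]
    rcases le_total b a with h | h
    · exact aux_lip hconv hmono hR hb ha h
    · rw [abs_sub_comm (Φ a), abs_sub_comm a]
      exact aux_lip hconv hmono hR ha hb h
  have hcOn : ContinuousOn Φ (Set.Icc 0 R) := hlipOn.continuousOn
  have hxmem : x ∈ Set.Icc (0:ℝ) R := ⟨hx0, by linarith⟩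
  refine (hcOn x hxmem).mono_of_mem_nhdsWithin ?_
  rw [mem_nhdsWithin]
  exact ⟨Set.Iio R, isOpen_Iio, by simp [hRdef], fun y hy => ⟨hy.2, le_of_lt hy.1⟩⟩

end Cont

section Inv
variable {Φ : ℝ → ℝ}

lemma aux_inv_nonempty (hconv : ConvexOn ℝ (Set.Ici 0) Φ) (hmono : MonotoneOn Φ (Set.Ici 0))
    (hΦ0 : Φ 0 = 0) (hΦnz : ∃ t > (0:ℝ), Φ t ≠ 0) :
    {t : ℝ | 0 ≤ t ∧ 1 ≤ Φ t}.Nonempty := by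
  obtain ⟨t0, ht0, hne⟩ := hΦnz
  have hδ : 0 < Φ t0 := lt_of_le_of_ne (aux_nonneg hmono hΦ0 ht0.le) (Ne.symm hne)
  obtain ⟨n, hn⟩ := exists_nat_gt (1 / Φ t0)
  have hn0 : 0 < (n:ℝ) := lt_trans (by positivity) hn
  refine ⟨n * t0, ⟨by positivity, ?_⟩⟩
  have key : Φ t0 ≤ (1 / n) * Φ (n * t0) := by
    have := aux_smul hconv hΦ0 (θ := 1/n) (t := n * t0) (by positivity)
      (by rw [div_le_one hn0]; exact_mod_cast Nat.one_le_iff_ne_zero.2 (by rintro rfl; simp at hn0)) (by positivity)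
    have harg : (1/(n:ℝ)) * (n * t0) = t0 := by field_simp
    rwa [harg] at this
  have h2 : (n:ℝ) * Φ t0 ≤ Φ (n * t0) := by
    have := mul_le_mul_of_nonneg_left key hn0.le
    have he : (n:ℝ) * ((1/n) * Φ (n*t0)) = Φ (n*t0) := by field_simp
    linarith [he ▸ this]
  have h3 : 1 < (n:ℝ) * Φ t0 := (div_lt_iff₀ hδ).1 hn
  linarith

end Inv

section Inv2
variable {Φ : ℝ → ℝ}

lemma aux_inv_le (hconv : ConvexOn ℝ (Set.Ici 0) Φ) (hmono : MonotoneOn Φ (Set.Ici 0))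
    (hΦ0 : Φ 0 = 0) (hΦnz : ∃ t > (0:ℝ), Φ t ≠ 0) {u : ℝ} (hu : 0 ≤ u) (hΦu : Φ u ≤ 1) :
    u ≤ invPhiOne Φ := by
  by_contra hlt
  push_neg at hlt
  have hne := aux_inv_nonempty hconv hmono hΦ0 hΦnz
  have hbdd : BddBelow {t : ℝ | 0 ≤ t ∧ 1 ≤ Φ t} := ⟨0, fun t ht => ht.1⟩
  obtain ⟨t, ht, htu⟩ := exists_lt_of_csInf_lt hne hlt
  -- t < u, 0 ≤ t, 1 ≤ Φ t, Φ u ≤ 1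
  have ht0 : 0 < t := by
    rcases eq_or_lt_of_le ht.1 with h | h
    · exfalso; have h2 : (1:ℝ) ≤ Φ t := ht.2; rw [← h, hΦ0] at h2; linarith
    · exact h
  have hΦt : Φ t = 1 := le_antisymm (le_trans (hmono (Set.mem_Ici.2 ht.1) (Set.mem_Ici.2 hu) htu.le) hΦu) ht.2
  -- convexity: t = (t/u) * u, so Φ t ≤ (t/u) Φ u < 1
  have hu0 : 0 < u := lt_of_le_of_lt ht.1 htu
  have := aux_smul hconv hΦ0 (θ := t/u) (t := u) (div_nonneg ht.1 hu)
    ((div_le_one hu0).2 htu.le) hu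
  rw [div_mul_cancel₀ _ (ne_of_gt hu0)] at this
  have : Φ t ≤ t/u * 1 := le_trans this (mul_le_mul_of_nonneg_left hΦu (div_nonneg ht.1 hu))
  rw [hΦt, mul_one] at this
  have : u ≤ t := (one_le_div hu0).1 this
  linarith

lemma aux_inv_nonneg : 0 ≤ invPhiOne Φ :=
  Real.sInf_nonneg (fun t ht => ht.1)

lemma aux_t0 (hconv : ConvexOn ℝ (Set.Ici 0) Φ) (hmono : MonotoneOn Φ (Set.Ici 0))
    (hΦ0 : Φ 0 = 0) : ∃ t0 > (0:ℝ), Φ t0 ≤ 1 := by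
  by_cases h : Φ 1 ≤ 1
  · exact ⟨1, one_pos, h⟩
  · push_neg at h
    have hΦ1 : 0 < Φ 1 := by linarith
    refine ⟨1 / Φ 1, by positivity, ?_⟩
    have := aux_smul hconv hΦ0 (θ := 1 / Φ 1) (t := 1) (by positivity)
      (by rw [div_le_one hΦ1]; linarith) zero_le_one
    rw [mul_one] at this
    calc Φ (1 / Φ 1) ≤ 1 / Φ 1 * Φ 1 := this
    _ = 1 := by field_simp
end Inv2

lemma lux_le_of_mem {Ω : Type*} [MeasurableSpace Ω] {μ : Measure Ω} {Φ : ℝ → ℝ} {g : Ω → ℝ}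
    {lam : ℝ} (h1 : 0 < lam) (h2 : ∫ ω, Φ (|g ω| / lam) ∂μ ≤ 1) : luxNorm μ Φ g ≤ lam :=
  csInf_le ⟨0, fun l hl => hl.1.le⟩ ⟨h1, h2⟩

lemma le_lux {Ω : Type*} [MeasurableSpace Ω] {μ : Measure Ω} {Φ : ℝ → ℝ} {g : Ω → ℝ} {b : ℝ}
    (hne : ∃ lam : ℝ, 0 < lam ∧ ∫ ω, Φ (|g ω| / lam) ∂μ ≤ 1)
    (h : ∀ lam : ℝ, 0 < lam → ∫ ω, Φ (|g ω| / lam) ∂μ ≤ 1 → b ≤ lam) : b ≤ luxNorm μ Φ g :=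
  le_csInf hne (fun lam hlam => h lam hlam.1 hlam.2)

theorem stmt_12 {Ω : Type*} [MeasurableSpace Ω] (μ : Measure Ω) [IsProbabilityMeasure μ]
    (Φ : ℝ → ℝ) (hconv : ConvexOn ℝ (Set.Ici 0) Φ) (hmono : MonotoneOn Φ (Set.Ici 0))
    (hΦ0 : Φ 0 = 0) (hΦnz : ∃ t > (0:ℝ), Φ t ≠ 0)
    (f : Ω → ℝ) (hfint : Integrable f μ)
    (hf : ∃ lam > (0:ℝ), ∫ ω, Φ (|f ω| / lam) ∂μ ≤ 1)
    (Mf : ℝ)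
    (hmin : ∀ a : ℝ, luxNorm μ Φ (fun ω => f ω - Mf) ≤ luxNorm μ Φ (fun ω => f ω - a)) :
    luxNorm μ Φ (fun ω => f ω - ∫ ω, f ω ∂μ)
      ≤ (1 + invPhiOne Φ * luxNorm μ Φ (fun _ => (1:ℝ)))
          * luxNorm μ Φ (fun ω => f ω - Mf) := by
  clear hmin
  set m := ∫ ω, f ω ∂μ with hm
  -- measurable monotone extension of Φ
  set ψ : ℝ → ℝ := fun u => Φ (max u 0) with hψ
  have hψmono : Monotone ψ := fun u v huv =>
    hmono (Set.mem_Ici.2 (le_max_right u 0)) (Set.mem_Ici.2 (le_max_right v 0))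
      (max_le_max huv le_rfl)
  have hψmeas : Measurable ψ := hψmono.measurable
  have hψeq : ∀ x : ℝ, 0 ≤ x → Φ x = ψ x := by
    intro x hx; simp [hψ, max_eq_left hx]
  have hfm : AEMeasurable f μ := hfint.1.aemeasurable
  have hmeasΦ : ∀ (a lam : ℝ), 0 < lam → AEStronglyMeasurable (fun ω => Φ (|f ω - a| / lam)) μ := by
    intro a lam h
    · have : (fun ω => Φ (|f ω - a| / lam)) = (fun ω => ψ (|f ω - a| / lam)) := by
        funext ω; exact hψeq _ (div_nonneg (abs_nonneg _) h.le)
      rw [this]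
      exact (hψmeas.comp_aemeasurable ((measurable_abs.comp_aemeasurable (hfm.sub aemeasurable_const)).div_const lam)).aestronglyMeasurable
  -- nonnegativity of basic quantities
  have hnn : ∀ t : ℝ, 0 ≤ t → 0 ≤ Φ t := fun t ht => aux_nonneg hmono hΦ0 ht
  have hbdd : ∀ g : Ω → ℝ, BddBelow {lam : ℝ | 0 < lam ∧ ∫ ω, Φ (|g ω| / lam) ∂μ ≤ 1} :=
    fun g => ⟨0, fun l hl => hl.1.le⟩
  have hLnn : ∀ g : Ω → ℝ, 0 ≤ luxNorm μ Φ g :=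
    fun g => Real.sInf_nonneg (fun l hl => hl.1.le)
  have hcnn : 0 ≤ invPhiOne Φ := Real.sInf_nonneg (fun t ht => ht.1)
  have hRHSnn : 0 ≤ (1 + invPhiOne Φ * luxNorm μ Φ (fun _ => (1:ℝ)))
      * luxNorm μ Φ (fun ω => f ω - Mf) := by
    have := hLnn (fun _ => (1:ℝ)); have := hLnn (fun ω => f ω - Mf); positivity
  by_cases hH : ∀ lam : ℝ, 0 < lam → Integrable (fun ω => Φ (|f ω - m| / lam)) μ
  · -- main case: all integrands integrable
    have hInt : ∀ (a lam : ℝ), 0 < lam → Integrable (fun ω => Φ (|f ω - a| / lam)) μ := by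
      intro a lam hlam
      have h2 : 0 < lam / 2 := by linarith
      refine Integrable.mono' (g := fun ω => (lam/2)/lam * Φ (|f ω - m| / (lam/2))
        + (lam/2)/lam * Φ (|a - m| / (lam/2)))
        (((hH (lam/2) h2).const_mul _).add (integrable_const _)) (hmeasΦ a lam hlam)
        (ae_of_all _ ?_)
      intro ω
      rw [Real.norm_of_nonneg (hnn _ (div_nonneg (abs_nonneg _) hlam.le))]
      have h1 : |f ω - a| ≤ |f ω - m| + |a - m| := by
        have h := abs_sub_le (f ω) m a
        rw [abs_sub_comm m a] at h; exact h
      have h2' : Φ (|f ω - a| / lam) ≤ Φ ((|f ω - m| + |a - m|) / lam) :=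
        hmono (Set.mem_Ici.2 (div_nonneg (abs_nonneg _) hlam.le))
          (Set.mem_Ici.2 (div_nonneg (by positivity) hlam.le)) (by gcongr)
      have h3 := aux_csplit hconv (abs_nonneg (f ω - m)) (abs_nonneg (a - m)) h2 h2
      rw [show lam/2 + lam/2 = lam from by ring] at h3
      linarith
    obtain ⟨t0, ht0pos, ht0le⟩ := aux_t0 hconv hmono hΦ0
    -- nonemptiness for the constant-one function
    have hE_ne : ∃ rho : ℝ, 0 < rho ∧ ∫ ω, Φ (|(fun _ => (1:ℝ)) ω| / rho) ∂μ ≤ 1 := by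
      refine ⟨1/t0, by positivity, ?_⟩
      have : (fun ω : Ω => Φ (|(fun _ => (1:ℝ)) ω| / (1/t0))) = fun _ : Ω => Φ t0 := by
        funext ω; rw [abs_one, one_div_one_div]
      rw [this, integral_const]
      simpa using ht0le
    -- nonemptiness for f - a
    obtain ⟨lam0, hlam0, hfle⟩ := hf
    have hfint0 : Integrable (fun ω => Φ (|f ω| / lam0)) μ := by
      simpa using hInt 0 lam0 hlam0
    have hSane : ∀ a : ℝ, ∃ lam : ℝ, 0 < lam ∧ ∫ ω, Φ (|f ω - a| / lam) ∂μ ≤ 1 := by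
      intro a
      set lam := 2 * max lam0 (|a| / t0) with hlamdef
      have hmaxpos : 0 < max lam0 (|a| / t0) := lt_max_of_lt_left hlam0
      have hlam : 0 < lam := by positivity
      have hhalf : lam / 2 = max lam0 (|a| / t0) := by rw [hlamdef]; ring
      refine ⟨lam, hlam, ?_⟩
      have hpt : ∀ ω, Φ (|f ω - a| / lam) ≤ (1:ℝ)/2 * Φ (|f ω| / lam0) + 1/2 * 1 := by
        intro ω
        have h1 : |f ω - a| ≤ |f ω| + |a| := abs_sub _ _
        have h2' : Φ (|f ω - a| / lam) ≤ Φ ((|f ω| + |a|) / lam) :=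
          hmono (Set.mem_Ici.2 (div_nonneg (abs_nonneg _) hlam.le))
            (Set.mem_Ici.2 (div_nonneg (by positivity) hlam.le)) (by gcongr)
        have h3 := aux_csplit hconv (abs_nonneg (f ω)) (abs_nonneg a)
          (by linarith : 0 < lam/2) (by linarith : 0 < lam/2)
        rw [show lam/2 + lam/2 = lam from by ring] at h3
        have hc2 : (lam/2)/lam = 1/2 := by field_simp
        rw [hc2] at h3
        have hb1 : Φ (|f ω| / (lam/2)) ≤ Φ (|f ω| / lam0) := by
          apply hmono (Set.mem_Ici.2 (by positivity)) (Set.mem_Ici.2 (by positivity))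
          exact div_le_div_of_nonneg_left (abs_nonneg _) hlam0
            (by rw [hhalf]; exact le_max_left _ _)
        have hb2 : Φ (|a| / (lam/2)) ≤ 1 := by
          refine le_trans (le_trans ?_ (le_of_eq rfl)) ht0le
          apply hmono (Set.mem_Ici.2 (by positivity)) (Set.mem_Ici.2 ht0pos.le)
          rw [div_le_iff₀ (by linarith : (0:ℝ) < lam/2), hhalf]
          calc |a| = |a| / t0 * t0 := by field_simp
            _ ≤ max lam0 (|a| / t0) * t0 := by
                apply mul_le_mul_of_nonneg_right (le_max_right _ _) ht0pos.le
            _ = t0 * max lam0 (|a| / t0) := mul_comm _ _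
        linarith
      have hle := integral_mono (hInt a lam hlam)
        ((hfint0.const_mul _).add (integrable_const _)) hpt
      calc ∫ ω, Φ (|f ω - a| / lam) ∂μ
          ≤ ∫ ω, ((1:ℝ)/2 * Φ (|f ω| / lam0) + 1/2 * 1) ∂μ := hle
        _ = 1/2 * ∫ ω, Φ (|f ω| / lam0) ∂μ + 1/2 := by
            rw [integral_add (hfint0.const_mul _) (integrable_const _), integral_const_mul _,
              integral_const]
            simp
        _ ≤ 1/2 * 1 + 1/2 := by
            have : 0 ≤ (1:ℝ)/2 := by norm_num
            nlinarith [hfle]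
        _ = 1 := by norm_num
    -- Jensen step
    have h3 : |m - Mf| ≤ ∫ ω, |f ω - Mf| ∂μ := by
      have he : m - Mf = ∫ ω, (f ω - Mf) ∂μ := by
        rw [integral_sub hfint (integrable_const _), integral_const]
        simp [hm]
      rw [he]
      calc |∫ ω, (f ω - Mf) ∂μ| = ‖∫ ω, (f ω - Mf) ∂μ‖ := (Real.norm_eq_abs _).symm
        _ ≤ ∫ ω, ‖f ω - Mf‖ ∂μ := norm_integral_le_integral_norm _
        _ = ∫ ω, |f ω - Mf| ∂μ := by simp [Real.norm_eq_abs]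
    have hjen : ∀ lam : ℝ, 0 < lam → (∫ ω, Φ (|f ω - Mf| / lam) ∂μ ≤ 1) →
        ∫ ω, |f ω - Mf| ∂μ ≤ invPhiOne Φ * lam := by
      intro lam hlam hle
      have hgint : Integrable (fun ω => |f ω - Mf| / lam) μ :=
        ((hfint.sub (integrable_const Mf)).abs).div_const lam
      have hcomp : Integrable (Φ ∘ (fun ω => |f ω - Mf| / lam)) μ := hInt Mf lam hlam
      have hj := hconv.map_integral_le (aux_cont hconv hmono) isClosed_Ici
        (ae_of_all _ (fun ω => Set.mem_Ici.2 (div_nonneg (abs_nonneg _) hlam.le))) hgint hcomp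
      rw [integral_div] at hj
      have h1 : Φ ((∫ ω, |f ω - Mf| ∂μ) / lam) ≤ 1 := le_trans hj hle
      have h2 := aux_inv_le hconv hmono hΦ0 hΦnz
        (div_nonneg (integral_nonneg (fun ω => abs_nonneg _)) hlam.le) h1
      have := (div_le_iff₀ hlam).1 h2
      linarith
    have key1 : |m - Mf| ≤ invPhiOne Φ * luxNorm μ Φ (fun ω => f ω - Mf) := by
      rcases eq_or_lt_of_le hcnn with hc | hc
      · obtain ⟨lam, hlam, hle⟩ := hSane Mf
        have h2 := hjen lam hlam hle
        rw [← hc, zero_mul] at h2 ⊢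
        linarith
      · refine le_trans h3 ?_
        rw [mul_comm, ← div_le_iff₀ hc]
        apply le_lux (hSane Mf)
        intro lam hlam hle
        rw [div_le_iff₀ hc]
        have := hjen lam hlam hle
        linarith [mul_comm lam (invPhiOne Φ)]
    -- triangle step
    have key2 : luxNorm μ Φ (fun ω => f ω - m) ≤ luxNorm μ Φ (fun ω => f ω - Mf)
        + |Mf - m| * luxNorm μ Φ (fun _ => (1:ℝ)) := by
      by_cases hb : Mf = m
      · rw [hb, sub_self, abs_zero, zero_mul, add_zero]
      · have hbpos : 0 < |Mf - m| := abs_pos.2 (sub_ne_zero.2 hb)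
        have step : ∀ lam : ℝ, 0 < lam → (∫ ω, Φ (|f ω - Mf| / lam) ∂μ ≤ 1) →
            ∀ rho : ℝ, 0 < rho → Φ (1/rho) ≤ 1 →
            luxNorm μ Φ (fun ω => f ω - m) ≤ lam + |Mf - m| * rho := by
          intro lam hlam hle rho hrho hΦrho
          have hq : 0 < |Mf - m| * rho := by positivity
          have hsig : 0 < lam + |Mf - m| * rho := by positivity
          apply lux_le_of_mem hsig
          have hpt : ∀ ω, Φ (|f ω - m| / (lam + |Mf - m| * rho)) ≤
              lam / (lam + |Mf - m| * rho) * Φ (|f ω - Mf| / lam)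
              + (|Mf - m| * rho) / (lam + |Mf - m| * rho) * Φ (1/rho) := by
            intro ω
            have h1 : |f ω - m| ≤ |f ω - Mf| + |Mf - m| := abs_sub_le _ _ _
            have h2' : Φ (|f ω - m| / (lam + |Mf - m| * rho)) ≤
                Φ ((|f ω - Mf| + |Mf - m|) / (lam + |Mf - m| * rho)) :=
              hmono (Set.mem_Ici.2 (div_nonneg (abs_nonneg _) hsig.le))
                (Set.mem_Ici.2 (div_nonneg (by positivity) hsig.le)) (by gcongr)
            have h3' := aux_csplit hconv (abs_nonneg (f ω - Mf)) (abs_nonneg (Mf - m)) hlam hq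
            rw [show |Mf - m| / (|Mf - m| * rho) = 1/rho from by
              rw [div_mul_eq_div_div, div_self (ne_of_gt hbpos)]] at h3'
            linarith
          have hint1 := hInt Mf lam hlam
          have hintL := hInt m (lam + |Mf - m| * rho) hsig
          calc ∫ ω, Φ (|f ω - m| / (lam + |Mf - m| * rho)) ∂μ
              ≤ ∫ ω, (lam / (lam + |Mf - m| * rho) * Φ (|f ω - Mf| / lam)
                + (|Mf - m| * rho) / (lam + |Mf - m| * rho) * Φ (1/rho)) ∂μ :=
                integral_mono hintL ((hint1.const_mul _).add (integrable_const _)) hpt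
            _ = lam / (lam + |Mf - m| * rho) * ∫ ω, Φ (|f ω - Mf| / lam) ∂μ
                + (|Mf - m| * rho) / (lam + |Mf - m| * rho) * Φ (1/rho) := by
                rw [integral_add (hint1.const_mul _) (integrable_const _), integral_const_mul _,
                  integral_const]
                simp
            _ ≤ lam / (lam + |Mf - m| * rho) * 1
                + (|Mf - m| * rho) / (lam + |Mf - m| * rho) * 1 := by
                exact add_le_add (mul_le_mul_of_nonneg_left hle (by positivity))
                  (mul_le_mul_of_nonneg_left hΦrho (by positivity))
            _ = 1 := by field_simp
        have step2 : ∀ lam : ℝ, 0 < lam → (∫ ω, Φ (|f ω - Mf| / lam) ∂μ ≤ 1) →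
            luxNorm μ Φ (fun ω => f ω - m) ≤ lam + |Mf - m| * luxNorm μ Φ (fun _ => (1:ℝ)) := by
          intro lam hlam hle
          have h := le_lux (b := (luxNorm μ Φ (fun ω => f ω - m) - lam) / |Mf - m|) hE_ne ?_
          · have h' := (div_le_iff₀ hbpos).1 h
            linarith [mul_comm (luxNorm μ Φ (fun _ : Ω => (1:ℝ))) (|Mf - m|)]
          · intro rho hrho hle1
            have hΦrho : Φ (1/rho) ≤ 1 := by
              have : (fun ω : Ω => Φ (|(fun _ => (1:ℝ)) ω| / rho)) = fun _ : Ω => Φ (1/rho) := by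
                funext ω; rw [abs_one]
              rw [this, integral_const] at hle1
              simpa using hle1
            have h4 := step lam hlam hle rho hrho hΦrho
            rw [div_le_iff₀ hbpos]
            linarith [mul_comm rho (|Mf - m|)]
        have step3 := le_lux (b := luxNorm μ Φ (fun ω => f ω - m)
            - |Mf - m| * luxNorm μ Φ (fun _ => (1:ℝ))) (hSane Mf)
          (fun lam hlam hle => by linarith [step2 lam hlam hle])
        linarith
    calc luxNorm μ Φ (fun ω => f ω - m)
        ≤ luxNorm μ Φ (fun ω => f ω - Mf)
          + |Mf - m| * luxNorm μ Φ (fun _ => (1:ℝ)) := key2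
      _ ≤ luxNorm μ Φ (fun ω => f ω - Mf)
          + (invPhiOne Φ * luxNorm μ Φ (fun ω => f ω - Mf))
            * luxNorm μ Φ (fun _ => (1:ℝ)) := by
          have hh : |Mf - m| ≤ invPhiOne Φ * luxNorm μ Φ (fun ω => f ω - Mf) := by
            rw [abs_sub_comm]; exact key1
          exact add_le_add_right (mul_le_mul_of_nonneg_right hh (hLnn _)) _
      _ = (1 + invPhiOne Φ * luxNorm μ Φ (fun _ => (1:ℝ)))
            * luxNorm μ Φ (fun ω => f ω - Mf) := by ring
  · -- degenerate case: luxNorm (f - m) = 0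
    push_neg at hH
    obtain ⟨lam0, hlam0, hni⟩ := hH
    refine le_trans ?_ hRHSnn
    have key : ∀ ε : ℝ, 0 < ε → luxNorm μ Φ (fun ω => f ω - m) ≤ ε := by
      intro ε hε
      have hlam : 0 < min lam0 ε := lt_min hlam0 hε
      have hnint : ¬ Integrable (fun ω => Φ (|f ω - m| / min lam0 ε)) μ := by
        intro hint
        apply hni
        apply hint.mono' ((hmeasΦ m lam0 hlam0))
        apply ae_of_all
        intro ω
        rw [Real.norm_of_nonneg (hnn _ (div_nonneg (abs_nonneg _) hlam0.le))]
        exact hmono (Set.mem_Ici.2 (div_nonneg (abs_nonneg _) hlam0.le))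
          (Set.mem_Ici.2 (div_nonneg (abs_nonneg _) hlam.le))
          (by gcongr; exact min_le_left _ _)
      have hmem : min lam0 ε ∈ {lam : ℝ | 0 < lam ∧
          ∫ ω, Φ (|f ω - m| / lam) ∂μ ≤ 1} := by
        refine ⟨hlam, ?_⟩
        rw [integral_undef hnint]
        norm_num
      calc luxNorm μ Φ (fun ω => f ω - m) ≤ min lam0 ε := by
            apply csInf_le (hbdd _)
            simpa using hmem
        _ ≤ ε := min_le_right _ _
    have : luxNorm μ Φ (fun ω => f ω - m) ≤ 0 :=
      le_of_forall_pos_le_add (fun ε hε => by simpa using key ε hε)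
    exact this
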